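/- Fix integers 1 ≤ r ≤ n. Let R be a commutative ring and c ∈ R. Let I_G(c) be the ideal of R[x₁,…,x_r] generated by h_{n−r+1}, …, h_{n−1}, h_n − c, and let I_P(c) be the ideal generated by x₁^n − c, …, x_r^n − c. Then Δ · I_G(c) ⊆ I_P(c); in particular, if P, Q ∈ R[x₁,…,x_r] satisfy P − Q ∈ I_G(c), then P·Δ − Q·Δ ∈ I_P(c). -/

import Mathlib

open Finset MvPolynomial

/-- The complete homogeneous symmetric polynomial of degree `k` in the variables
`x₁, …, x_r`: the sum of all monomials of total degree `k`. -/
noncomputable def hsymm (R : Type*) [CommRing R] (r k : ℕ) : MvPolynomial (Fin r) R :=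
  ∑ d ∈ (Fintype.piFinset fun _ : Fin r => Finset.range (k + 1)).filter
      (fun d => ∑ i, d i = k),
    ∏ i, X i ^ d i

/-- The Vandermonde determinant `Δ = ∏_{1 ≤ i < j ≤ r} (xᵢ - xⱼ)`. -/
noncomputable def vander (R : Type*) [CommRing R] (r : ℕ) : MvPolynomial (Fin r) R :=
  ∏ p ∈ Finset.univ.filter (fun p : Fin r × Fin r => p.1 < p.2), (X p.1 - X p.2)

/-- The ideal `I_P(c) = ⟨x₁ⁿ - c, …, x_rⁿ - c⟩` of `R[x₁,…,x_r]`. -/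
noncomputable def IP (R : Type*) [CommRing R] (r n : ℕ) (c : R) :
    Ideal (MvPolynomial (Fin r) R) :=
  Ideal.span (Set.range fun i : Fin r => X i ^ n - C c)

/-- The ideal `I_G(c) = ⟨h_{n-r+1}, …, h_{n-1}, h_n - c⟩` of `R[x₁,…,x_r]`. -/
noncomputable def IG (R : Type*) [CommRing R] (r n : ℕ) (c : R) :
    Ideal (MvPolynomial (Fin r) R) :=
  Ideal.span ((fun k => hsymm R r k) '' Set.Icc (n - r + 1) (n - 1) ∪ {hsymm R r n - C c})

namespace Thm25

variable (R : Type*) [CommRing R] [Nontrivial R] (r : ℕ)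

lemma hsymm_zero : _root_.hsymm R r 0 = 1 := by
  have h : (Fintype.piFinset fun _ : Fin r => Finset.range (0 + 1)).filter
      (fun d => ∑ i, d i = 0) = {fun _ => 0} := by
    ext d
    simp only [Finset.mem_filter, Fintype.mem_piFinset, Finset.mem_range,
      Finset.mem_singleton, Nat.lt_one_iff]
    constructor
    · rintro ⟨h1, -⟩; funext i; exact Nat.lt_one_iff.mp (zero_add 1 ▸ h1 i)
    · rintro rfl; simp
  rw [_root_.hsymm, h, Finset.sum_singleton]
  simp

/-- truncated complete homogeneous: `hh t = h_{t-r}` if `t ≥ r`, else `0`. -/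
noncomputable def hh (t : ℕ) : MvPolynomial (Fin r) R :=
  if r ≤ t then _root_.hsymm R r (t - r) else 0

lemma hh_lt {t : ℕ} (h : t < r) : hh R r t = 0 := by simp [hh, Nat.not_le.mpr h]

lemma hh_ge {t : ℕ} (h : r ≤ t) : hh R r t = _root_.hsymm R r (t - r) := by simp [hh, h]

/-- the "characteristic polynomial" `∏ (Y - xᵢ)`. -/
noncomputable def chp : Polynomial (MvPolynomial (Fin r) R) :=
  ∏ i : Fin r, (Polynomial.X - Polynomial.C (X i))

noncomputable def ca (j : ℕ) : MvPolynomial (Fin r) R := (chp R r).coeff j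

lemma monic_chp : (chp R r).Monic :=
  Polynomial.monic_prod_of_monic _ _ fun i _ => Polynomial.monic_X_sub_C _

lemma natDegree_chp : (chp R r).natDegree = r := by
  rw [chp, Polynomial.natDegree_prod_of_monic _ _ fun i _ => Polynomial.monic_X_sub_C _]
  simp only [Polynomial.natDegree_X_sub_C, Finset.sum_const, Finset.card_univ,
    Fintype.card_fin, smul_eq_mul, mul_one]

lemma ca_top : ca R r r = 1 := by
  have := (monic_chp R r).leadingCoeff
  rwa [Polynomial.leadingCoeff, natDegree_chp] at this

lemma root_rel (i : Fin r) :
    ∑ j ∈ Finset.range (r + 1), ca R r j * (X i : MvPolynomial (Fin r) R) ^ j = 0 := by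
  have h0 : Polynomial.eval (X i : MvPolynomial (Fin r) R) (chp R r) = 0 := by
    rw [chp, Polynomial.eval_prod]
    exact Finset.prod_eq_zero (Finset.mem_univ i) (by simp)
  rw [Polynomial.eval_eq_sum_range, natDegree_chp] at h0
  exact h0



lemma reflect_one_X_sub_C (x : R) :
    Polynomial.reflect 1 (Polynomial.X - Polynomial.C x)
      = 1 - Polynomial.C x * Polynomial.X := by
  have h1 : (Polynomial.X - Polynomial.C x : Polynomial R)
      = Polynomial.X ^ 1 - Polynomial.C x * Polynomial.X ^ 0 := by ring
  rw [h1, sub_eq_add_neg, ← neg_mul, ← Polynomial.C_neg, Polynomial.reflect_add,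
    Polynomial.reflect_C_mul, Polynomial.reflect_monomial, Polynomial.reflect_monomial]
  simp [Polynomial.revAt_le]
  ring

lemma reflect_prod_X_sub_C {ι : Type*} (s : Finset ι) (x : ι → R) :
    Polynomial.reflect s.card (∏ i ∈ s, (Polynomial.X - Polynomial.C (x i)))
      = ∏ i ∈ s, (1 - Polynomial.C (x i) * Polynomial.X) := by
  classical
  induction s using Finset.induction with
  | empty => simp
  | @insert a s ha ih =>
    have hdeg : (∏ i ∈ s, (Polynomial.X - Polynomial.C (x i))).natDegree ≤ s.card := by
      refine le_trans (Polynomial.natDegree_prod_le _ _) ?_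
      have h2 := Finset.sum_le_sum (s := s)
        (f := fun i => (Polynomial.X - Polynomial.C (x i)).natDegree) (g := fun _ => 1)
        (fun i _ => Polynomial.natDegree_X_sub_C_le (x i))
      simpa using h2
    rw [Finset.prod_insert ha, Finset.prod_insert ha, Finset.card_insert_of_notMem ha,
      show s.card + 1 = 1 + s.card by ring,
      Polynomial.reflect_mul _ _ (Polynomial.natDegree_X_sub_C_le _) hdeg,
      reflect_one_X_sub_C, ih]

variable (R : Type*) [CommRing R] [Nontrivial R] (r : ℕ)

/-- the reversed polynomial `∏ (1 - xᵢ Y)`. -/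
noncomputable def qp : Polynomial (MvPolynomial (Fin r) R) :=
  ∏ i : Fin r, (1 - Polynomial.C (X i) * Polynomial.X)

lemma qp_eq_reflect : qp R r = Polynomial.reflect r (chp R r) := by
  rw [qp, chp, ← reflect_prod_X_sub_C]
  simp

lemma qp_coeff {j : ℕ} (hj : j ≤ r) : (qp R r).coeff j = ca R r (r - j) := by
  rw [qp_eq_reflect, Polynomial.coeff_reflect, Polynomial.revAt_le hj]
  rfl

lemma qp_coeff_eq_zero {j : ℕ} (hj : r < j) : (qp R r).coeff j = 0 := by
  rw [qp_eq_reflect, Polynomial.coeff_reflect]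
  have : Polynomial.revAt r j = j := Polynomial.revAt_eq_self_of_lt hj
  rw [this]
  exact Polynomial.coeff_eq_zero_of_natDegree_lt (lt_of_le_of_lt (by rw [natDegree_chp]) hj)

/-- generating series of the `hsymm`. -/
noncomputable def Hser : PowerSeries (MvPolynomial (Fin r) R) :=
  PowerSeries.mk fun t => _root_.hsymm R r t

/-- geometric series `∑ xᵢᵗ Tᵗ`. -/
noncomputable def Gser (i : Fin r) : PowerSeries (MvPolynomial (Fin r) R) :=
  PowerSeries.mk fun t => (X i : MvPolynomial (Fin r) R) ^ t

lemma geom_mul (i : Fin r) :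
    ((1 : PowerSeries (MvPolynomial (Fin r) R))
        - PowerSeries.C (X i) * PowerSeries.X) * Gser R r i = 1 := by
  ext t
  rw [sub_mul, one_mul, map_sub, mul_assoc]
  cases t with
  | zero =>
    simp [Gser, PowerSeries.coeff_zero_eq_constantCoeff]
  | succ t =>
    rw [PowerSeries.coeff_C_mul, PowerSeries.coeff_succ_X_mul]
    simp [Gser, pow_succ, PowerSeries.coeff_one, mul_comm]

lemma prod_Gser : (∏ i : Fin r, Gser R r i) = Hser R r := by
  refine PowerSeries.ext fun d => ?_
  rw [PowerSeries.coeff_prod, Hser, PowerSeries.coeff_mk, _root_.hsymm]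
  refine Finset.sum_nbij' (fun l : Fin r →₀ ℕ => (l : Fin r → ℕ))
    (fun g : Fin r → ℕ => Finsupp.equivFunOnFinite.symm g) ?_ ?_ ?_ ?_ ?_
  · intro l hl
    rw [Finset.mem_finsuppAntidiag] at hl
    simp only [Finset.mem_filter, Fintype.mem_piFinset, Finset.mem_range]
    constructor
    · intro i
      have : l i ≤ d := by
        rw [← hl.1]
        exact Finset.single_le_sum (fun _ _ => Nat.zero_le _) (Finset.mem_univ i)
      omega
    · exact hl.1
  · intro g hg
    rw [Finset.mem_finsuppAntidiag]
    simp only [Finset.mem_filter, Fintype.mem_piFinset, Finset.mem_range] at hg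
    refine ⟨?_, fun x _ => Finset.mem_univ x⟩
    rw [← hg.2]
    exact Finset.sum_congr rfl fun i _ => by simp
  · intro l _
    exact Finsupp.equivFunOnFinite_symm_coe l
  · intro g _
    rfl
  · intro l _
    exact Finset.prod_congr rfl fun i _ => by rw [Gser, PowerSeries.coeff_mk]

lemma qp_mul_Hser : (qp R r : PowerSeries (MvPolynomial (Fin r) R)) * Hser R r = 1 := by
  rw [← prod_Gser, qp]
  have hcoe : ((∏ i : Fin r, (1 - Polynomial.C (X i) * Polynomial.X) :
      Polynomial (MvPolynomial (Fin r) R)) : PowerSeries (MvPolynomial (Fin r) R))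
      = ∏ i : Fin r, ((1 : PowerSeries (MvPolynomial (Fin r) R))
          - PowerSeries.C (X i) * PowerSeries.X) := by
    rw [← Polynomial.coeToPowerSeries.ringHom_apply, map_prod]
    exact Finset.prod_congr rfl fun i _ => by
      simp [Polynomial.coeToPowerSeries.ringHom_apply]
  rw [hcoe, ← Finset.prod_mul_distrib]
  exact Finset.prod_eq_one fun i _ => geom_mul R r i

lemma HE {k : ℕ} (hk : 1 ≤ k) :
    ∑ j ∈ Finset.range (r + 1), ca R r j * hh R r (k + j) = 0 := by
  have h1 : (PowerSeries.coeff k)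
      ((qp R r : PowerSeries (MvPolynomial (Fin r) R)) * Hser R r) = 0 := by
    rw [qp_mul_Hser]
    simp [PowerSeries.coeff_one, Nat.one_le_iff_ne_zero.mp hk]
  rw [PowerSeries.coeff_mul, Finset.Nat.sum_antidiagonal_eq_sum_range_succ_mk] at h1
  simp only [Polynomial.coeff_coe, Hser, PowerSeries.coeff_mk] at h1
  rw [← Finset.sum_range_reflect]
  calc ∑ j ∈ Finset.range (r + 1), ca R r (r + 1 - 1 - j) * hh R r (k + (r + 1 - 1 - j))
      = ∑ j ∈ Finset.range (r + 1),
          (if j ≤ k then (qp R r).coeff j * _root_.hsymm R r (k - j) else 0) := by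
        refine Finset.sum_congr rfl fun j hj => ?_
        rw [Finset.mem_range] at hj
        have hjr : j ≤ r := by omega
        have e1 : r + 1 - 1 - j = r - j := by omega
        rw [e1]
        by_cases hjk : j ≤ k
        · rw [if_pos hjk, qp_coeff R r hjr, hh_ge R r (by omega),
            show r - j = r - j from rfl]
          congr 2
          omega
        · rw [if_neg hjk, hh_lt R r (by omega), mul_zero]
    _ = ∑ j ∈ (Finset.range (r + 1)).filter (· ≤ k),
          (qp R r).coeff j * _root_.hsymm R r (k - j) := (Finset.sum_filter _ _).symm
    _ = ∑ j ∈ (Finset.range (k + 1)).filter (· ≤ r),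
          (qp R r).coeff j * _root_.hsymm R r (k - j) := by
        refine Finset.sum_congr ?_ fun _ _ => rfl
        ext j
        simp only [Finset.mem_filter, Finset.mem_range]
        omega
    _ = ∑ j ∈ Finset.range (k + 1), (qp R r).coeff j * _root_.hsymm R r (k - j) := by
        rw [← Finset.sum_filter_add_sum_filter_not (Finset.range (k + 1)) (· ≤ r)]
        have : ∑ j ∈ (Finset.range (k + 1)).filter (fun j => ¬ j ≤ r),
            (qp R r).coeff j * _root_.hsymm R r (k - j) = 0 := by
          refine Finset.sum_eq_zero fun j hj => ?_
          rw [Finset.mem_filter] at hj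
          rw [qp_coeff_eq_zero R r (by omega), zero_mul]
        rw [this, add_zero]
    _ = 0 := h1

/-- auxiliary: determinant is additive over a finite-sum row. -/
lemma det_updateRow_finsum {n' : Type*} [DecidableEq n'] [Fintype n'] {A : Type*} [CommRing A]
    (M : Matrix n' n' A) (l : n') {ι : Type*} (s : Finset ι) (v : ι → n' → A) :
    (M.updateRow l (fun i => ∑ j ∈ s, v j i)).det = ∑ j ∈ s, (M.updateRow l (v j)).det := by
  classical
  induction s using Finset.induction with
  | empty =>
    rw [Finset.sum_empty]
    exact Matrix.det_eq_zero_of_row_eq_zero l fun j => by simp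
  | @insert a s ha ih =>
    have h1 : (fun i => ∑ j ∈ insert a s, v j i)
        = v a + fun i => ∑ j ∈ s, v j i := by
      funext i; simp [Finset.sum_insert ha]
    rw [h1, Matrix.det_updateRow_add, ih, Finset.sum_insert ha]

/-- the (transposed) Vandermonde matrix, rows indexed by exponents `0,…,r-1`. -/
noncomputable def Vm : Matrix (Fin r) (Fin r) (MvPolynomial (Fin r) R) :=
  Matrix.of fun i j => (X j : MvPolynomial (Fin r) R) ^ (i : ℕ)

noncomputable def wrow (m : ℕ) : Fin r → MvPolynomial (Fin r) R := fun j => (X j) ^ m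

def lst (hr : 0 < r) : Fin r := ⟨r - 1, by omega⟩

/-- determinant of `Vm` with last row replaced by `m`-th powers. -/
noncomputable def Fdet (hr : 0 < r) (m : ℕ) : MvPolynomial (Fin r) R :=
  ((Vm R r).updateRow (lst r hr) (wrow R r m)).det

/-- the "reversed" Vandermonde product. -/
noncomputable def Dp : MvPolynomial (Fin r) R :=
  ∏ p ∈ Finset.univ.filter (fun p : Fin r × Fin r => p.1 < p.2), (X p.2 - X p.1)

lemma detVm : (Vm R r).det = Dp R r := by
  have h : Vm R r = Matrix.transpose
      (Matrix.vandermonde fun i : Fin r => (X i : MvPolynomial (Fin r) R)) := rfl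
  rw [h, Matrix.det_transpose, Matrix.det_vandermonde, Dp,
    Finset.prod_sigma' Finset.univ (fun i => Finset.Ioi i)
      (fun i j => ((X j : MvPolynomial (Fin r) R) - X i))]
  refine Finset.prod_nbij' (fun p => (p.1, p.2)) (fun p => ⟨p.1, p.2⟩) ?_ ?_ ?_ ?_ ?_
  · intro p hp
    rw [Finset.mem_sigma] at hp
    simp only [Finset.mem_filter, Finset.mem_univ, true_and]
    exact Finset.mem_Ioi.mp hp.2
  · intro p hp
    rw [Finset.mem_sigma]
    simp only [Finset.mem_filter, Finset.mem_univ, true_and] at hp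
    exact ⟨Finset.mem_univ _, Finset.mem_Ioi.mpr hp⟩
  · intro p _; rfl
  · intro p _; rfl
  · intro p _; rfl

lemma vander_eq :
    vander R r = (-1 : MvPolynomial (Fin r) R) ^
      ((Finset.univ.filter (fun p : Fin r × Fin r => p.1 < p.2)).card) * Dp R r := by
  rw [_root_.vander, Dp,
    Finset.prod_congr rfl (fun (p : Fin r × Fin r) _ =>
      (by ring : (X p.1 : MvPolynomial (Fin r) R) - X p.2
        = -1 * ((X p.2 : MvPolynomial (Fin r) R) - X p.1))),
    Finset.prod_mul_distrib, Finset.prod_const]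

lemma Fdet_lt (hr : 0 < r) {m : ℕ} (hm : m < r - 1) : Fdet R r hr m = 0 := by
  refine Matrix.det_zero_of_row_eq (i := (⟨m, by omega⟩ : Fin r)) (j := lst r hr) ?_ ?_
  · intro h
    have := congrArg Fin.val h
    simp only [lst] at this
    omega
  · funext j
    rw [Matrix.updateRow_ne (by intro h; have := congrArg Fin.val h; simp only [lst] at this; omega),
      Matrix.updateRow_self]
    simp [Vm, wrow]

lemma Fdet_base (hr : 0 < r) : Fdet R r hr (r - 1) = Dp R r := by
  have h : wrow R r (r - 1) = Vm R r (lst r hr) := by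
    funext j; simp [wrow, Vm, lst]
  rw [Fdet, h, Matrix.updateRow_eq_self, detVm]

lemma Fdet_rec (hr : 0 < r) (m : ℕ) :
    ∑ j ∈ Finset.range (r + 1), ca R r j * Fdet R r hr (m + j) = 0 := by
  have h1 : ∀ j, ca R r j * Fdet R r hr (m + j)
      = ((Vm R r).updateRow (lst r hr)
          (fun l => ca R r j * (X l : MvPolynomial (Fin r) R) ^ (m + j))).det := by
    intro j
    have h2 : (ca R r j • wrow R r (m + j))
        = fun l => ca R r j * (X l : MvPolynomial (Fin r) R) ^ (m + j) :=
      funext fun l => by simp [wrow]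
    rw [← h2, Matrix.det_updateRow_smul, Fdet]
  calc ∑ j ∈ Finset.range (r + 1), ca R r j * Fdet R r hr (m + j)
      = ∑ j ∈ Finset.range (r + 1),
          ((Vm R r).updateRow (lst r hr)
            (fun l => ca R r j * (X l : MvPolynomial (Fin r) R) ^ (m + j))).det :=
        Finset.sum_congr rfl fun j _ => h1 j
    _ = ((Vm R r).updateRow (lst r hr)
          (fun l => ∑ j ∈ Finset.range (r + 1),
            ca R r j * (X l : MvPolynomial (Fin r) R) ^ (m + j))).det :=
        (det_updateRow_finsum _ _ _ _).symm
    _ = 0 := by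
        refine Matrix.det_eq_zero_of_row_eq_zero (lst r hr) fun l => ?_
        rw [Matrix.updateRow_self]
        have : ∀ j, ca R r j * (X l : MvPolynomial (Fin r) R) ^ (m + j)
            = (X l : MvPolynomial (Fin r) R) ^ m * (ca R r j * (X l) ^ j) := by
          intro j; rw [pow_add]; ring
        rw [Finset.sum_congr rfl fun j _ => this j, ← Finset.mul_sum, root_rel R r l, mul_zero]

lemma Fdet_eq (hr : 0 < r) (m : ℕ) : Fdet R r hr m = Dp R r * hh R r (m + 1) := by
  induction m using Nat.strong_induction_on with
  | _ m ih =>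
    rcases lt_trichotomy m (r - 1) with h | h | h
    · rw [Fdet_lt R r hr h, hh_lt R r (by omega), mul_zero]
    · subst h
      rw [Fdet_base, show r - 1 + 1 = r by omega, hh_ge R r le_rfl, Nat.sub_self,
        hsymm_zero, mul_one]
    · have hm : r ≤ m := by omega
      have hrec := Fdet_rec R r hr (m - r)
      rw [Finset.sum_range_succ, ca_top, one_mul, show m - r + r = m by omega] at hrec
      have hHE := HE R r (k := m - r + 1) (by omega)
      rw [Finset.sum_range_succ, ca_top, one_mul, show m - r + 1 + r = m + 1 by omega] at hHE
      have hsum : ∑ j ∈ Finset.range r, ca R r j * Fdet R r hr (m - r + j)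
          = Dp R r * ∑ j ∈ Finset.range r, ca R r j * hh R r (m - r + 1 + j) := by
        rw [Finset.mul_sum]
        refine Finset.sum_congr rfl fun j hj => ?_
        rw [Finset.mem_range] at hj
        rw [ih (m - r + j) (by omega), show m - r + j + 1 = m - r + 1 + j by omega]
        ring
      linear_combination hrec - hsum - Dp R r * hHE

variable (n : ℕ) (c : R)

lemma mk_X_pow (i : Fin r) :
    Ideal.Quotient.mk (IP R r n c) ((X i : MvPolynomial (Fin r) R) ^ n)
      = Ideal.Quotient.mk (IP R r n c) (C c) := by
  rw [Ideal.Quotient.mk_eq_mk_iff_sub_mem]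
  exact Ideal.subset_span ⟨i, rfl⟩

lemma Fdet_shift (hr : 0 < r) (m : ℕ) :
    Ideal.Quotient.mk (IP R r n c) (Fdet R r hr (m + n))
      = Ideal.Quotient.mk (IP R r n c) (C c)
        * Ideal.Quotient.mk (IP R r n c) (Fdet R r hr m) := by
  set φ := Ideal.Quotient.mk (IP R r n c) with hφ
  have hmap : ∀ t, φ (Fdet R r hr t)
      = ((φ : MvPolynomial (Fin r) R →+* _).mapMatrix
          ((Vm R r).updateRow (lst r hr) (wrow R r t))).det := fun t =>
    RingHom.map_det φ _
  have hu : ∀ t, ((φ : MvPolynomial (Fin r) R →+* _).mapMatrix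
        ((Vm R r).updateRow (lst r hr) (wrow R r t)))
      = ((Vm R r).map φ).updateRow (lst r hr) (φ ∘ wrow R r t) := by
    intro t
    rw [RingHom.mapMatrix_apply, Matrix.map_updateRow]
  have hv : (φ ∘ wrow R r (m + n)) = φ (C c) • (φ ∘ wrow R r m) := by
    funext j
    simp only [Function.comp_apply, wrow, Pi.smul_apply, smul_eq_mul]
    rw [pow_add, map_mul, mul_comm, ← mk_X_pow R r n c j]
  rw [hmap, hmap, hu, hu, hv, Matrix.det_updateRow_smul]

lemma gen1 (hr : 0 < r) (hrn : r ≤ n) {k : ℕ} (hk1 : n - r + 1 ≤ k) (hk2 : k ≤ n - 1) :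
    Dp R r * _root_.hsymm R r k ∈ IP R r n c := by
  have hn : 0 < n := by omega
  have h1 : Dp R r * _root_.hsymm R r k = Fdet R r hr (k + r - 1) := by
    rw [Fdet_eq R r hr, show k + r - 1 + 1 = k + r by omega, hh_ge R r (by omega),
      Nat.add_sub_cancel]
  rw [← Ideal.Quotient.eq_zero_iff_mem, h1, show k + r - 1 = (k + r - 1 - n) + n by omega,
    Fdet_shift R r n c hr, Fdet_lt R r hr (show k + r - 1 - n < r - 1 by omega), map_zero,
    mul_zero]

lemma gen2 (hr : 0 < r) (hrn : r ≤ n) :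
    Dp R r * (_root_.hsymm R r n - C c) ∈ IP R r n c := by
  have h1 : Dp R r * _root_.hsymm R r n = Fdet R r hr (n + r - 1) := by
    rw [Fdet_eq R r hr, show n + r - 1 + 1 = n + r by omega, hh_ge R r (by omega),
      Nat.add_sub_cancel]
  rw [← Ideal.Quotient.eq_zero_iff_mem, mul_sub, map_sub, h1,
    show n + r - 1 = (r - 1) + n by omega, Fdet_shift R r n c hr, Fdet_base, map_mul]
  ring

lemma gen_main (hr : 0 < r) (hrn : r ≤ n) :
    ∀ f ∈ IG R r n c, Dp R r * f ∈ IP R r n c := by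
  intro f hf
  refine Submodule.span_induction ?_ ?_ ?_ ?_ hf
  · rintro x hx
    rcases hx with hx | hx
    · obtain ⟨k, hk, rfl⟩ := hx
      exact gen1 R r n c hr hrn hk.1 hk.2
    · rw [Set.mem_singleton_iff] at hx
      subst hx
      exact gen2 R r n c hr hrn
  · rw [mul_zero]; exact zero_mem _
  · intro x y _ _ hx hy
    rw [mul_add]; exact add_mem hx hy
  · intro a x _ hx
    rw [smul_eq_mul, show Dp R r * (a * x) = a * (Dp R r * x) by ring]
    exact Ideal.mul_mem_left _ a hx

end Thm25

/-- Theorem 2.5 (algebraic form): for `1 ≤ r ≤ n`, a commutative ring `R` and `c ∈ R`,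
multiplication by the Vandermonde determinant `Δ` carries the ideal
`I_G(c) = ⟨h_{n-r+1}, …, h_{n-1}, h_n - c⟩` into `I_P(c) = ⟨x₁ⁿ - c, …, x_rⁿ - c⟩`;
in particular, if `P - Q ∈ I_G(c)` then `P·Δ - Q·Δ ∈ I_P(c)`. -/
theorem vandermonde_mul_IG_subset_IP (n r : ℕ) (hr : 1 ≤ r) (hrn : r ≤ n)
    (R : Type*) [CommRing R] (c : R) :
    (∀ f ∈ IG R r n c, vander R r * f ∈ IP R r n c) ∧
    ∀ P Q : MvPolynomial (Fin r) R, P - Q ∈ IG R r n c →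
      P * vander R r - Q * vander R r ∈ IP R r n c := by
  have main : ∀ f ∈ IG R r n c, vander R r * f ∈ IP R r n c := by
    rcases subsingleton_or_nontrivial R with hR | hR
    · haveI : Subsingleton (MvPolynomial (Fin r) R) := by
        constructor
        intro a b
        ext m
        exact Subsingleton.elim _ _
      intro f _
      rw [Subsingleton.elim (vander R r * f) 0]
      exact zero_mem _
    · intro f hf
      rw [Thm25.vander_eq R r, mul_assoc]
      exact Ideal.mul_mem_left _ _ (Thm25.gen_main R r n c hr hrn f hf)
  refine ⟨main, fun P Q h => ?_⟩
  rw [show P * vander R r - Q * vander R r = vander R r * (P - Q) by ring]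
  exact main _ h
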